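/- Let G be a connected graph of order n ≥ 2 and size m. Then the signless Laplacian spectral radius satisfies q(G) ≤ 2m/(n−1) + n − 2, with equality if and only if G = K_n or G = K_{1,n−1}. -/

import Mathlib

open SimpleGraph

/-- The signless Laplacian matrix `Q(G) = D(G) + A(G)` of a graph. -/
noncomputable def signlessLaplacian {V : Type*} [Fintype V] [DecidableEq V]
    (G : SimpleGraph V) [DecidableRel G.Adj] : Matrix V V ℝ :=
  Matrix.diagonal (fun v => (G.degree v : ℝ)) + G.adjMatrix ℝ

/-- The signless Laplacian spectral radius: the largest eigenvalue of `Q(G)`. -/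
noncomputable def qSpectralRadius {V : Type*} [Fintype V] [DecidableEq V]
    (G : SimpleGraph V) [DecidableRel G.Adj] : ℝ :=
  sSup (spectrum ℝ (signlessLaplacian G))

section Aux

open Finset Matrix

set_option linter.unusedSectionVars false

variable {V : Type*} [Fintype V] [DecidableEq V] (G : SimpleGraph V) [DecidableRel G.Adj]

lemma sl_mulVec (x : V → ℝ) (v : V) :
    (signlessLaplacian G).mulVec x v
      = (G.degree v : ℝ) * x v + ∑ w ∈ G.neighborFinset v, x w := by
  simp [signlessLaplacian, Matrix.add_mulVec, Matrix.mulVec_diagonal, Pi.add_apply]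

lemma sl_herm : (signlessLaplacian G).IsHermitian := by
  apply Matrix.IsHermitian.add
  · exact Matrix.isHermitian_diagonal _
  · rw [Matrix.IsHermitian, conjTranspose_eq_transpose_of_trivial]
    exact G.isSymm_adjMatrix

lemma sl_spectrum_iff (μ : ℝ) :
    μ ∈ spectrum ℝ (signlessLaplacian G) ↔
      ∃ x : V → ℝ, x ≠ 0 ∧ (signlessLaplacian G).mulVec x = μ • x := by
  rw [← AlgEquiv.spectrum_eq (Matrix.toLinAlgEquiv' : Matrix V V ℝ ≃ₐ[ℝ] _),
    ← Module.End.hasEigenvalue_iff_mem_spectrum]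
  constructor
  · intro h
    obtain ⟨x, hx, hx0⟩ := h.exists_hasEigenvector
    rw [Module.End.mem_eigenspace_iff, Matrix.toLinAlgEquiv'_apply] at hx
    exact ⟨x, hx0, hx⟩
  · rintro ⟨x, hx0, hx⟩
    apply Module.End.hasEigenvalue_of_hasEigenvector (x := x)
    refine ⟨?_, hx0⟩
    rw [Module.End.mem_eigenspace_iff, Matrix.toLinAlgEquiv'_apply]
    exact hx

lemma sl_eig_le {c : ℝ} (hd : ∀ v, 0 < (G.degree v : ℝ))
    (hrow : ∀ v, (G.degree v : ℝ) * G.degree v + ∑ w ∈ G.neighborFinset v, (G.degree w : ℝ)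
      ≤ c * G.degree v) :
    ∀ μ ∈ spectrum ℝ (signlessLaplacian G), μ ≤ c := by
  intro μ hμ
  obtain ⟨x, hx0, hxe⟩ := (sl_spectrum_iff G μ).1 hμ
  obtain ⟨v0, hv0⟩ := Function.ne_iff.mp hx0
  obtain ⟨u, -, hu⟩ := Finset.exists_max_image Finset.univ
    (fun v => |x v| / (G.degree v : ℝ)) ⟨v0, Finset.mem_univ v0⟩
  set Mx := |x u| / (G.degree u : ℝ) with hMx
  have hME : ∀ w, |x w| ≤ Mx * G.degree w := by
    intro w
    have := hu w (Finset.mem_univ w)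
    rwa [div_le_iff₀ (hd w)] at this
  have hMpos : 0 < Mx :=
    lt_of_lt_of_le (div_pos (abs_pos.2 hv0) (hd v0)) (hu v0 (Finset.mem_univ v0))
  have hxu : |x u| = Mx * G.degree u := by
    rw [hMx, div_mul_cancel₀ _ (hd u).ne']
  have heq := congrFun hxe u
  rw [sl_mulVec, Pi.smul_apply, smul_eq_mul] at heq
  have hxupos : 0 < |x u| := hxu ▸ mul_pos hMpos (hd u)
  rw [← mul_le_mul_iff_left₀ hxupos]
  calc μ * |x u| ≤ |μ| * |x u| :=
        mul_le_mul_of_nonneg_right (le_abs_self μ) (abs_nonneg _)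
    _ = |μ * x u| := (abs_mul μ (x u)).symm
    _ = |(G.degree u : ℝ) * x u + ∑ w ∈ G.neighborFinset u, x w| := by rw [heq]
    _ ≤ |(G.degree u : ℝ) * x u| + |∑ w ∈ G.neighborFinset u, x w| := abs_add_le _ _
    _ ≤ (G.degree u : ℝ) * |x u| + ∑ w ∈ G.neighborFinset u, |x w| := by
        gcongr
        · rw [abs_mul, abs_of_nonneg (hd u).le]
        · exact Finset.abs_sum_le_sum_abs _ _
    _ ≤ (G.degree u : ℝ) * (Mx * G.degree u)
        + ∑ w ∈ G.neighborFinset u, Mx * G.degree w := by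
        gcongr
        · exact hME u
        · exact hME _
    _ = Mx * ((G.degree u : ℝ) * G.degree u
        + ∑ w ∈ G.neighborFinset u, (G.degree w : ℝ)) := by
        rw [mul_add, Finset.mul_sum]; ring
    _ ≤ Mx * (c * G.degree u) := mul_le_mul_of_nonneg_left (hrow u) hMpos.le
    _ = c * (Mx * G.degree u) := by ring
    _ = c * |x u| := by rw [hxu]

lemma sl_rows_eq_of_eig {c : ℝ} (hd : ∀ v, 0 < (G.degree v : ℝ))
    (hrow : ∀ v, (G.degree v : ℝ) * G.degree v + ∑ w ∈ G.neighborFinset v, (G.degree w : ℝ)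
      ≤ c * G.degree v)
    (hconn : G.Connected) {x : V → ℝ} (hx0 : x ≠ 0)
    (hxe : (signlessLaplacian G).mulVec x = c • x) :
    ∀ v, (G.degree v : ℝ) * G.degree v + ∑ w ∈ G.neighborFinset v, (G.degree w : ℝ)
      = c * G.degree v := by
  obtain ⟨v0, hv0⟩ := Function.ne_iff.mp hx0
  obtain ⟨u, -, hu⟩ := Finset.exists_max_image Finset.univ
    (fun v => |x v| / (G.degree v : ℝ)) ⟨v0, Finset.mem_univ v0⟩
  set Mx := |x u| / (G.degree u : ℝ) with hMx
  have hME : ∀ w, |x w| ≤ Mx * G.degree w := by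
    intro w
    have := hu w (Finset.mem_univ w)
    rwa [div_le_iff₀ (hd w)] at this
  have hMpos : 0 < Mx :=
    lt_of_lt_of_le (div_pos (abs_pos.2 hv0) (hd v0)) (hu v0 (Finset.mem_univ v0))
  have hxu : |x u| = Mx * G.degree u := by
    rw [hMx, div_mul_cancel₀ _ (hd u).ne']
  have hSnn : ∀ v, (0:ℝ) ≤ ∑ w ∈ G.neighborFinset v, (G.degree w : ℝ) := fun v =>
    Finset.sum_nonneg fun w _ => (hd w).le
  have hdc : ∀ v, (G.degree v : ℝ) ≤ c := by
    intro v
    nlinarith [hrow v, hSnn v, hd v]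
  have main : ∀ v, |x v| = Mx * G.degree v →
      ((G.degree v : ℝ) * G.degree v + ∑ w ∈ G.neighborFinset v, (G.degree w : ℝ)
        = c * G.degree v) ∧ ∀ w ∈ G.neighborFinset v, |x w| = Mx * G.degree w := by
    intro v hv
    have heq := congrFun hxe v
    rw [sl_mulVec, Pi.smul_apply, smul_eq_mul] at heq
    have hsum : ∑ w ∈ G.neighborFinset v, x w = (c - G.degree v) * x v := by
      linarith [heq]
    have h1 : (c - G.degree v) * (Mx * G.degree v) = |∑ w ∈ G.neighborFinset v, x w| := by
      rw [hsum, abs_mul, abs_of_nonneg (sub_nonneg.2 (hdc v)), hv]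
    have h2 : |∑ w ∈ G.neighborFinset v, x w| ≤ ∑ w ∈ G.neighborFinset v, |x w| :=
      Finset.abs_sum_le_sum_abs _ _
    have h3 : ∑ w ∈ G.neighborFinset v, |x w|
        ≤ ∑ w ∈ G.neighborFinset v, Mx * G.degree w :=
      Finset.sum_le_sum fun w _ => hME w
    have h4 : ∑ w ∈ G.neighborFinset v, Mx * (G.degree w : ℝ)
        = Mx * ∑ w ∈ G.neighborFinset v, (G.degree w : ℝ) := by
      rw [Finset.mul_sum]
    have h5 : Mx * ∑ w ∈ G.neighborFinset v, (G.degree w : ℝ)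
        ≤ Mx * ((c - G.degree v) * G.degree v) := by
      have := hrow v
      nlinarith [hMpos.le]
    have hSeq : Mx * ∑ w ∈ G.neighborFinset v, (G.degree w : ℝ)
        = Mx * ((c - G.degree v) * G.degree v) := by
      apply le_antisymm h5
      nlinarith [h1, h2, h3, h4]
    constructor
    · have hS : ∑ w ∈ G.neighborFinset v, (G.degree w : ℝ) = (c - G.degree v) * G.degree v :=
        mul_left_cancel₀ hMpos.ne' hSeq
      nlinarith [hS]
    · have hsum2 : ∑ w ∈ G.neighborFinset v, |x w|
          = ∑ w ∈ G.neighborFinset v, Mx * G.degree w := by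
        apply le_antisymm h3
        nlinarith [h1, h2, h4, hSeq]
      intro w hw
      exact (Finset.sum_eq_sum_iff_of_le fun w _ => hME w).1 hsum2 w hw
  have reach : ∀ b, |x b| = Mx * G.degree b := by
    have aux : ∀ a b, G.Walk a b → |x a| = Mx * G.degree a → |x b| = Mx * G.degree b := by
      intro a b p
      induction p with
      | nil => exact id
      | cons h q ih =>
        intro ha
        exact ih ((main _ ha).2 _ ((mem_neighborFinset _ _ _).2 h))
    intro b
    obtain ⟨p⟩ := hconn.preconnected u b
    exact aux u b p hxu
  intro v
  exact (main v (reach v)).1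

lemma sl_deg_ge_one (hconn : G.Connected) (h2 : 2 ≤ Fintype.card V) :
    ∀ v, 1 ≤ G.degree v := by
  intro v
  have : ∃ w, G.Adj v w := by
    obtain ⟨w, hw⟩ := Fintype.exists_ne_of_one_lt_card (by omega) v
    obtain ⟨p⟩ := hconn.preconnected v w
    cases p with
    | nil => exact absurd rfl hw
    | cons h q => exact ⟨_, h⟩
  exact (G.degree_pos_iff_exists_adj v).2 this

section Setup

variable (n m : ℕ) (hn : n = Fintype.card V) (hn2 : 2 ≤ n) (hm : m = G.edgeFinset.card)
    (hconn : G.Connected)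

include hn hn2 hm hconn in
lemma sl_rowIneq :
    ∀ v, (G.degree v : ℝ) * G.degree v + ∑ w ∈ G.neighborFinset v, (G.degree w : ℝ)
      ≤ (2 * m / ((n:ℝ) - 1) + n - 2) * G.degree v := by
  have hd1 : ∀ v, 1 ≤ G.degree v := sl_deg_ge_one G hconn (by omega)
  have hdle : ∀ v, G.degree v ≤ n - 1 := fun v => by
    have := G.degree_lt_card_verts v; omega
  have hnR : (2:ℝ) ≤ n := by exact_mod_cast hn2
  set N : ℝ := (n:ℝ) - 1 with hN
  have hN1 : 1 ≤ N := by rw [hN]; linarith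
  have hNpos : 0 < N := by linarith
  have hd1R : ∀ v, (1:ℝ) ≤ G.degree v := fun v => by exact_mod_cast hd1 v
  have hdleR : ∀ v, (G.degree v : ℝ) ≤ N := fun v => by
    rw [hN]
    have h := hdle v
    have : ((G.degree v : ℕ) : ℝ) ≤ ((n - 1 : ℕ) : ℝ) := by exact_mod_cast h
    rw [Nat.cast_sub (by omega)] at this
    simpa using this
  have hhand : ∑ v, (G.degree v : ℝ) = 2 * m := by
    rw [← Nat.cast_sum]
    rw [G.sum_degrees_eq_twice_card_edges, hm]
    push_cast; ring
  have hsub : ∀ v, insert v (G.neighborFinset v) ⊆ Finset.univ := fun v => subset_univ _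
  have hsplit : ∀ v, (∑ w ∈ Finset.univ \ insert v (G.neighborFinset v), (G.degree w : ℝ))
      + ((G.degree v : ℝ) + ∑ w ∈ G.neighborFinset v, (G.degree w : ℝ)) = 2 * m := by
    intro v
    rw [← Finset.sum_insert (f := fun w => ((G.degree w : ℕ) : ℝ))
      (G.notMem_neighborFinset_self v), Finset.sum_sdiff (hsub v), hhand]
  have hcardrest : ∀ v, ((Finset.univ \ insert v (G.neighborFinset v)).card : ℝ)
      = N - G.degree v := by
    intro v
    rw [Finset.card_sdiff_of_subset (hsub v), Finset.card_insert_of_notMem (G.notMem_neighborFinset_self v),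
      Finset.card_univ, ← hn, G.card_neighborFinset_eq_degree]
    rw [Nat.cast_sub (by have := hdle v; omega)]
    push_cast [hN]; ring
  have hrest : ∀ v, N - (G.degree v : ℝ)
      ≤ ∑ w ∈ Finset.univ \ insert v (G.neighborFinset v), (G.degree w : ℝ) := by
    intro v
    rw [← hcardrest v]
    have := Finset.card_nsmul_le_sum (Finset.univ \ insert v (G.neighborFinset v))
      (fun w => (G.degree w : ℝ)) 1 (fun w _ => hd1R w)
    simpa using this
  have hSle : ∀ v, ∑ w ∈ G.neighborFinset v, (G.degree w : ℝ) ≤ (G.degree v : ℝ) * N := by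
    intro v
    have := Finset.sum_le_card_nsmul (G.neighborFinset v) (fun w => (G.degree w : ℝ)) N
      (fun w _ => hdleR w)
    rw [G.card_neighborFinset_eq_degree] at this
    simpa [nsmul_eq_mul] using this
  have hSleK : ∀ v, ∑ w ∈ G.neighborFinset v, (G.degree w : ℝ) ≤ 2 * m - N := by
    intro v
    have h1 := hsplit v
    have h2 := hrest v
    linarith
  have hcN : (2 * (m:ℝ) / N + n - 2) * N = 2 * m + (N - 1) * N := by
    field_simp
    ring
  intro v
  set c : ℝ := 2 * (m:ℝ) / N + n - 2 with hc
  set d : ℝ := (G.degree v : ℝ) with hdv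
  rw [← mul_le_mul_iff_left₀ hNpos]
  have hgoalrhs : c * d * N = d * (2 * m) + d * (N - 1) * N := by
    have : c * d * N = d * (c * N) := by ring
    rw [this, hcN]; ring
  rw [hgoalrhs]
  rcases le_total (d * N) (2 * m - N) with h | h
  · have h1 := hSle v
    have h2 := hd1R v
    nlinarith [mul_le_mul_of_nonneg_right h1 hNpos.le]
  · have h1 := hSleK v
    have h2 := hd1R v
    have h3 := hdleR v
    nlinarith [mul_nonneg (sub_nonneg.2 h3) (sub_nonneg.2 h),
      mul_le_mul_of_nonneg_right h1 hNpos.le]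

include hn hn2 hm hconn in
lemma sl_classify
    (hrow : ∀ v, (G.degree v : ℝ) * G.degree v + ∑ w ∈ G.neighborFinset v, (G.degree w : ℝ)
      = (2 * m / ((n:ℝ) - 1) + n - 2) * G.degree v) :
    (∀ a b : V, a ≠ b → G.Adj a b) ∨
      (∃ w : V, ∀ a b : V, G.Adj a b ↔ ((a = w ∧ b ≠ w) ∨ (b = w ∧ a ≠ w))) := by
  have hd1 : ∀ v, 1 ≤ G.degree v := sl_deg_ge_one G hconn (by omega)
  have hdle : ∀ v, G.degree v ≤ n - 1 := fun v => by
    have := G.degree_lt_card_verts v; omega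
  have hnR : (2:ℝ) ≤ n := by exact_mod_cast hn2
  set N : ℝ := (n:ℝ) - 1 with hN
  have hN1 : 1 ≤ N := by rw [hN]; linarith
  have hNpos : 0 < N := by linarith
  have hd1R : ∀ v, (1:ℝ) ≤ G.degree v := fun v => by exact_mod_cast hd1 v
  have hdleR : ∀ v, (G.degree v : ℝ) ≤ N := fun v => by
    rw [hN]
    have h := hdle v
    have : ((G.degree v : ℕ) : ℝ) ≤ ((n - 1 : ℕ) : ℝ) := by exact_mod_cast h
    rw [Nat.cast_sub (by omega)] at this
    simpa using this
  have hhand : ∑ v, (G.degree v : ℝ) = 2 * m := by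
    rw [← Nat.cast_sum]
    rw [G.sum_degrees_eq_twice_card_edges, hm]
    push_cast; ring
  have hsub : ∀ v, insert v (G.neighborFinset v) ⊆ Finset.univ := fun v => subset_univ _
  have hsplit : ∀ v, (∑ w ∈ Finset.univ \ insert v (G.neighborFinset v), (G.degree w : ℝ))
      + ((G.degree v : ℝ) + ∑ w ∈ G.neighborFinset v, (G.degree w : ℝ)) = 2 * m := by
    intro v
    rw [← Finset.sum_insert (f := fun w => ((G.degree w : ℕ) : ℝ))
      (G.notMem_neighborFinset_self v), Finset.sum_sdiff (hsub v), hhand]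
  have hcardrest : ∀ v, ((Finset.univ \ insert v (G.neighborFinset v)).card : ℝ)
      = N - G.degree v := by
    intro v
    rw [Finset.card_sdiff_of_subset (hsub v), Finset.card_insert_of_notMem (G.notMem_neighborFinset_self v),
      Finset.card_univ, ← hn, G.card_neighborFinset_eq_degree]
    rw [Nat.cast_sub (by have := hdle v; omega)]
    push_cast [hN]; ring
  have hrest : ∀ v, N - (G.degree v : ℝ)
      ≤ ∑ w ∈ Finset.univ \ insert v (G.neighborFinset v), (G.degree w : ℝ) := by
    intro v
    rw [← hcardrest v]
    have := Finset.card_nsmul_le_sum (Finset.univ \ insert v (G.neighborFinset v))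
      (fun w => (G.degree w : ℝ)) 1 (fun w _ => hd1R w)
    simpa using this
  have hSle : ∀ v, ∑ w ∈ G.neighborFinset v, (G.degree w : ℝ) ≤ (G.degree v : ℝ) * N := by
    intro v
    have := Finset.sum_le_card_nsmul (G.neighborFinset v) (fun w => (G.degree w : ℝ)) N
      (fun w _ => hdleR w)
    rw [G.card_neighborFinset_eq_degree] at this
    simpa [nsmul_eq_mul] using this
  set c : ℝ := 2 * (m:ℝ) / N + n - 2 with hc
  have hcN : c * N = 2 * m + (N - 1) * N := by
    rw [hc]; field_simp; ring
  have st1 : ∀ v, 2 * (m:ℝ) - N ≤ (G.degree v : ℝ) * N := by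
    intro v
    have h6 : c * (G.degree v : ℝ) ≤ (G.degree v : ℝ) * (G.degree v : ℝ)
        + (G.degree v : ℝ) * N := by
      have := hrow v
      have := hSle v
      linarith
    have hkey : (G.degree v : ℝ) * (2 * m - N) ≤ (G.degree v : ℝ) * ((G.degree v : ℝ) * N) := by
      nlinarith [mul_le_mul_of_nonneg_right h6 hNpos.le, hcN, hd1R v]
    exact le_of_mul_le_mul_left hkey (by linarith [hd1R v])
  have st2 : ∀ v, (G.degree v : ℝ) ≤ N - 1 →
      ((G.degree v : ℝ) * N = 2 * m - N ∧
        ∀ w ∈ Finset.univ \ insert v (G.neighborFinset v), (G.degree w : ℝ) = 1) := by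
    intro v hv
    set d : ℝ := (G.degree v : ℝ) with hd
    set R : ℝ := ∑ w ∈ Finset.univ \ insert v (G.neighborFinset v), (G.degree w : ℝ) with hR
    have hRN : R * N = (N - d) * (2 * m - d * N) := by
      linear_combination N * (hsplit v) - N * (hrow v) - d * hcN
    have hdN : d * N = 2 * m - N := by
      have h1 : N - d ≤ R := hrest v
      have h2 : (1:ℝ) ≤ N - d := by linarith
      have h3 : d * N ≤ 2 * m - N := by
        nlinarith [mul_le_mul_of_nonneg_right h1 hNpos.le, hRN, st1 v]
      linarith [st1 v]
    refine ⟨hdN, ?_⟩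
    have hReq : R = N - d := by
      have : R * N = (N - d) * N := by rw [hRN, hdN]; ring
      exact mul_right_cancel₀ hNpos.ne' this
    have hsum1 : ∑ w ∈ Finset.univ \ insert v (G.neighborFinset v), (1:ℝ)
        = ∑ w ∈ Finset.univ \ insert v (G.neighborFinset v), (G.degree w : ℝ) := by
      rw [Finset.sum_const, ← hR, hReq, nsmul_eq_mul, mul_one, hcardrest v]
    intro w hw
    exact ((Finset.sum_eq_sum_iff_of_le fun w _ => hd1R w).1 hsum1 w hw).symm
  have hfull : ∀ v, G.degree v = n - 1 → ∀ b, b ≠ v → G.Adj v b := by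
    intro v hv b hb
    have hsub2 : G.neighborFinset v ⊆ Finset.univ.erase v := by
      intro w hw
      rw [Finset.mem_erase]
      exact ⟨fun h => G.notMem_neighborFinset_self v (h ▸ hw), Finset.mem_univ w⟩
    have hcards : (Finset.univ.erase v).card ≤ (G.neighborFinset v).card := by
      rw [Finset.card_erase_of_mem (Finset.mem_univ v), Finset.card_univ, ← hn,
        G.card_neighborFinset_eq_degree, hv]
    have heq := Finset.eq_of_subset_of_card_le hsub2 hcards
    have : b ∈ G.neighborFinset v := by
      rw [heq, Finset.mem_erase]
      exact ⟨hb, Finset.mem_univ b⟩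
    rwa [mem_neighborFinset] at this
  by_cases hall : ∀ v, G.degree v = n - 1
  · left
    intro a b hab
    exact hfull a (hall a) b hab.symm
  · right
    push_neg at hall
    obtain ⟨v, hv⟩ := hall
    have hvle : (G.degree v : ℝ) ≤ N - 1 := by
      have h1 : G.degree v ≤ n - 2 := by have := hdle v; omega
      have : ((G.degree v : ℕ) : ℝ) ≤ ((n - 2 : ℕ) : ℝ) := by exact_mod_cast h1
      rw [Nat.cast_sub (by omega)] at this
      push_cast at this
      rw [hN]; linarith
    obtain ⟨hdN, hrest1⟩ := st2 v hvle
    have hrestne : (Finset.univ \ insert v (G.neighborFinset v)).Nonempty := by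
      rw [← Finset.card_pos]
      have : (0:ℝ) < ((Finset.univ \ insert v (G.neighborFinset v)).card : ℝ) := by
        rw [hcardrest v]; linarith
      exact_mod_cast this
    obtain ⟨z, hz⟩ := hrestne
    have hz1 : (G.degree z : ℝ) = 1 := hrest1 z hz
    have hn3 : 3 ≤ n := by
      by_contra h
      have hn2' : n = 2 := by omega
      have : N = 1 := by rw [hN, hn2']; norm_num
      rw [this] at hvle
      linarith [hd1R v]
    have hzle : (G.degree z : ℝ) ≤ N - 1 := by
      rw [hz1, hN]
      have : (3:ℝ) ≤ n := by exact_mod_cast hn3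
      linarith
    obtain ⟨hzN, -⟩ := st2 z hzle
    rw [hz1, one_mul] at hzN
    have hdv1 : (G.degree v : ℝ) = 1 := by
      have : (G.degree v : ℝ) * N = N := by rw [hdN, ← hzN]
      have := mul_right_cancel₀ hNpos.ne' (by rw [this, one_mul] : (G.degree v : ℝ) * N = 1 * N)
      exact this
    have hdegv1 : G.degree v = 1 := by exact_mod_cast hdv1
    obtain ⟨w, hw⟩ := Finset.card_eq_one.mp hdegv1
    have hvw : v ≠ w := by
      intro h
      exact G.notMem_neighborFinset_self v (by rw [hw, h]; exact Finset.mem_singleton_self w)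
    have hSw : ∑ u ∈ G.neighborFinset v, (G.degree u : ℝ) = (G.degree w : ℝ) := by
      rw [hw, Finset.sum_singleton]
    have h2m : 2 * (m:ℝ) = 2 * N := by linarith [hzN]
    have hcval : c = 1 + N := by
      have : c * N = (1 + N) * N := by rw [hcN, h2m]; ring
      exact mul_right_cancel₀ hNpos.ne' this
    have hdw : (G.degree w : ℝ) = N := by
      have := hrow v
      rw [hSw, hdv1, hcval] at this
      linarith
    have hdegw : G.degree w = n - 1 := by
      have : ((G.degree w : ℕ) : ℝ) = ((n - 1 : ℕ) : ℝ) := by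
        rw [hdw, hN, Nat.cast_sub (by omega)]; push_cast; ring
      exact_mod_cast this
    refine ⟨w, ?_⟩
    have hsingle : ∀ a, a ≠ w → G.neighborFinset a = {w} := by
      intro a haw
      by_cases hav : a = v
      · rw [hav, hw]
      · have haz : a ∈ Finset.univ \ insert v (G.neighborFinset v) := by
          rw [Finset.mem_sdiff, Finset.mem_insert]
          refine ⟨Finset.mem_univ a, ?_⟩
          rw [hw]
          simp [hav, haw]
        have ha1 : (G.degree a : ℝ) = 1 := hrest1 a haz
        have hdega : G.degree a = 1 := by exact_mod_cast ha1
        obtain ⟨b, hb⟩ := Finset.card_eq_one.mp hdega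
        have hwb : w ∈ G.neighborFinset a := by
          rw [mem_neighborFinset]
          exact (hfull w hdegw a haw).symm
        rw [hb] at hwb ⊢
        rw [Finset.mem_singleton] at hwb
        rw [hwb]
    intro a b
    constructor
    · intro hadj
      by_cases haw : a = w
      · exact Or.inl ⟨haw, fun hbw => G.ne_of_adj hadj (haw.trans hbw.symm)⟩
      · have : b ∈ G.neighborFinset a := (mem_neighborFinset _ _ _).2 hadj
        rw [hsingle a haw, Finset.mem_singleton] at this
        exact Or.inr ⟨this, haw⟩
    · rintro (⟨ha, hbw⟩ | ⟨hb, haw⟩)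
      · rw [ha]; exact hfull w hdegw b (ha ▸ hbw)
      · rw [hb]; exact (hfull w hdegw a (hb ▸ haw)).symm

include hn hn2 hm in
lemma sl_rows_of_full (hall : ∀ a b : V, a ≠ b → G.Adj a b) :
    ∀ v, (G.degree v : ℝ) * G.degree v + ∑ w ∈ G.neighborFinset v, (G.degree w : ℝ)
      = (2 * m / ((n:ℝ) - 1) + n - 2) * G.degree v := by
  have hnR : (2:ℝ) ≤ n := by exact_mod_cast hn2
  set N : ℝ := (n:ℝ) - 1 with hN
  have hNpos : 0 < N := by linarith
  have hnbr : ∀ v : V, G.neighborFinset v = Finset.univ.erase v := by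
    intro v
    ext w
    rw [mem_neighborFinset, Finset.mem_erase]
    constructor
    · intro h; exact ⟨(G.ne_of_adj h).symm, Finset.mem_univ w⟩
    · rintro ⟨h, -⟩; exact hall v w h.symm
  have hdeg : ∀ v : V, (G.degree v : ℝ) = N := by
    intro v
    rw [← G.card_neighborFinset_eq_degree, hnbr v,
      Finset.card_erase_of_mem (Finset.mem_univ v), Finset.card_univ, ← hn,
      Nat.cast_sub (by omega), hN]
    push_cast; ring
  have hhand : ∑ v, (G.degree v : ℝ) = 2 * m := by
    rw [← Nat.cast_sum, G.sum_degrees_eq_twice_card_edges, hm]; push_cast; ring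
  have h2m : 2 * (m:ℝ) = (N + 1) * N := by
    rw [← hhand, Finset.sum_congr rfl (fun v _ => hdeg v), Finset.sum_const, Finset.card_univ,
      ← hn, nsmul_eq_mul]
    have : ((n:ℕ):ℝ) = N + 1 := by rw [hN]; ring
    rw [this]
  have hcN : (2 * (m:ℝ) / N + n - 2) * N = 2 * m + (N - 1) * N := by
    field_simp; ring
  intro v
  have hS : ∑ w ∈ G.neighborFinset v, (G.degree w : ℝ) = N * N := by
    rw [Finset.sum_congr rfl (fun w _ => hdeg w), Finset.sum_const, nsmul_eq_mul,
      G.card_neighborFinset_eq_degree, hdeg v]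
  rw [hS, hdeg v]
  have : (2 * (m:ℝ) / N + n - 2) * N = 2 * N * N := by rw [hcN, h2m]; ring
  rw [this]
  ring

include hn hn2 hm in
lemma sl_rows_of_star {w : V}
    (hstar : ∀ a b : V, G.Adj a b ↔ ((a = w ∧ b ≠ w) ∨ (b = w ∧ a ≠ w))) :
    ∀ v, (G.degree v : ℝ) * G.degree v + ∑ u ∈ G.neighborFinset v, (G.degree u : ℝ)
      = (2 * m / ((n:ℝ) - 1) + n - 2) * G.degree v := by
  have hnR : (2:ℝ) ≤ n := by exact_mod_cast hn2
  set N : ℝ := (n:ℝ) - 1 with hN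
  have hNpos : 0 < N := by linarith
  have hnbrw : G.neighborFinset w = Finset.univ.erase w := by
    ext u
    rw [mem_neighborFinset, Finset.mem_erase, hstar]
    constructor
    · rintro (⟨-, h⟩ | ⟨h, hww⟩)
      · exact ⟨h, Finset.mem_univ u⟩
      · exact absurd rfl hww
    · rintro ⟨h, -⟩; exact Or.inl ⟨rfl, h⟩
  have hnbra : ∀ a : V, a ≠ w → G.neighborFinset a = {w} := by
    intro a ha
    ext u
    rw [mem_neighborFinset, Finset.mem_singleton, hstar]
    constructor
    · rintro (⟨h, -⟩ | ⟨h, -⟩)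
      · exact absurd h ha
      · exact h
    · rintro rfl; exact Or.inr ⟨rfl, ha⟩
  have hdegw : (G.degree w : ℝ) = N := by
    rw [← G.card_neighborFinset_eq_degree, hnbrw,
      Finset.card_erase_of_mem (Finset.mem_univ w), Finset.card_univ, ← hn,
      Nat.cast_sub (by omega), hN]
    push_cast; ring
  have hdega : ∀ a : V, a ≠ w → (G.degree a : ℝ) = 1 := by
    intro a ha
    rw [← G.card_neighborFinset_eq_degree, hnbra a ha]
    simp
  have hhand : ∑ v, (G.degree v : ℝ) = 2 * m := by
    rw [← Nat.cast_sum, G.sum_degrees_eq_twice_card_edges, hm]; push_cast; ring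
  have h2m : 2 * (m:ℝ) = 2 * N := by
    rw [← hhand,
      show (Finset.univ : Finset V) = insert w (Finset.univ.erase w) from
        (Finset.insert_erase (Finset.mem_univ w)).symm,
      Finset.sum_insert (Finset.notMem_erase w Finset.univ)]
    rw [Finset.sum_congr rfl (fun v hv => hdega v (Finset.mem_erase.mp hv).1), Finset.sum_const,
      Finset.card_erase_of_mem (Finset.mem_univ w), Finset.card_univ, ← hn, nsmul_eq_mul, mul_one,
      hdegw, Nat.cast_sub (by omega)]
    push_cast [hN]; ring
  have hcval : (2 * (m:ℝ) / N + n - 2) = 1 + N := by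
    have hcN : (2 * (m:ℝ) / N + n - 2) * N = 2 * m + (N - 1) * N := by
      field_simp; ring
    have : (2 * (m:ℝ) / N + n - 2) * N = (1 + N) * N := by rw [hcN, h2m]; ring
    exact mul_right_cancel₀ hNpos.ne' this
  intro v
  rw [hcval]
  by_cases hv : v = w
  · subst hv
    have hS : ∑ u ∈ G.neighborFinset v, (G.degree u : ℝ) = N := by
      rw [hnbrw, Finset.sum_congr rfl (fun u hu => hdega u (Finset.mem_erase.mp hu).1),
        Finset.sum_const, Finset.card_erase_of_mem (Finset.mem_univ v), Finset.card_univ, ← hn,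
        nsmul_eq_mul, mul_one, Nat.cast_sub (by omega)]
      push_cast [hN]; ring
    rw [hS, hdegw]; ring
  · have hS : ∑ u ∈ G.neighborFinset v, (G.degree u : ℝ) = N := by
      rw [hnbra v hv, Finset.sum_singleton, hdegw]
    rw [hS, hdega v hv]; ring

end Setup

lemma sl_star_iso_of_structure (n : ℕ) (hn : n = Fintype.card V) (hn2 : 2 ≤ n) (w : V)
    (hstar : ∀ a b : V, G.Adj a b ↔ ((a = w ∧ b ≠ w) ∨ (b = w ∧ a ≠ w))) :
    Nonempty (G ≃g completeBipartiteGraph (Fin 1) (Fin (n - 1))) := by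
  have e1 : {a : V // a = w} ≃ Fin 1 :=
    Fintype.equivFinOfCardEq (by simp [Fintype.card_subtype_eq])
  have e2 : {a : V // ¬ a = w} ≃ Fin (n - 1) :=
    Fintype.equivFinOfCardEq (by
      rw [Fintype.card_subtype_compl, Fintype.card_subtype_eq, ← hn])
  refine ⟨⟨(Equiv.sumCompl (· = w)).symm.trans (Equiv.sumCongr e1 e2), ?_⟩⟩
  intro a b
  rw [hstar]
  by_cases ha : a = w <;> by_cases hb : b = w
  · rw [Equiv.trans_apply, Equiv.trans_apply,
      Equiv.sumCompl_symm_apply_of_pos (p := (· = w)) ha,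
      Equiv.sumCompl_symm_apply_of_pos (p := (· = w)) hb]
    simp [completeBipartiteGraph, ha, hb]
  · rw [Equiv.trans_apply, Equiv.trans_apply,
      Equiv.sumCompl_symm_apply_of_pos (p := (· = w)) ha,
      Equiv.sumCompl_symm_apply_of_neg (p := (· = w)) hb]
    simp [completeBipartiteGraph, ha, hb]
  · rw [Equiv.trans_apply, Equiv.trans_apply,
      Equiv.sumCompl_symm_apply_of_neg (p := (· = w)) ha,
      Equiv.sumCompl_symm_apply_of_pos (p := (· = w)) hb]
    simp [completeBipartiteGraph, ha, hb]
  · rw [Equiv.trans_apply, Equiv.trans_apply,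
      Equiv.sumCompl_symm_apply_of_neg (p := (· = w)) ha,
      Equiv.sumCompl_symm_apply_of_neg (p := (· = w)) hb]
    simp [completeBipartiteGraph, ha, hb]

lemma sl_structure_of_star_iso (n : ℕ)
    (φ : G ≃g completeBipartiteGraph (Fin 1) (Fin (n - 1))) :
    ∀ a b : V, G.Adj a b ↔
      ((a = φ.symm (Sum.inl 0) ∧ b ≠ φ.symm (Sum.inl 0)) ∨
        (b = φ.symm (Sum.inl 0) ∧ a ≠ φ.symm (Sum.inl 0))) := by
  set w := φ.symm (Sum.inl 0) with hw
  have hleft : ∀ a : V, (φ a).isLeft = true ↔ a = w := by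
    intro a
    constructor
    · intro h
      obtain ⟨i, hi⟩ := Sum.isLeft_iff.mp h
      have : i = 0 := Subsingleton.elim i 0
      subst this
      rw [hw, ← hi, φ.symm_apply_apply]
    · intro h
      subst h
      rw [hw, φ.apply_symm_apply]
      rfl
  have hright : ∀ a : V, (φ a).isRight = true ↔ a ≠ w := by
    intro a
    rw [ne_eq, ← hleft a]
    cases (φ a) <;> simp
  intro a b
  rw [← φ.map_adj_iff]
  show (φ a).isLeft = true ∧ (φ b).isRight = true ∨ (φ a).isRight = true ∧ (φ b).isLeft = true ↔ _
  rw [hleft, hright, hleft, hright]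
  tauto

end Aux

/-- For a connected graph of order `n ≥ 2` and size `m`,
`q(G) ≤ 2m/(n−1) + n − 2`, with equality iff `G = K_n` or `G ≅ K_{1,n−1}`. -/
theorem qSpectralRadius_le {V : Type*} [Fintype V] [DecidableEq V]
    (G : SimpleGraph V) [DecidableRel G.Adj] (n m : ℕ)
    (hn : n = Fintype.card V) (hn2 : 2 ≤ n) (hm : m = G.edgeFinset.card)
    (hconn : G.Connected) :
    qSpectralRadius G ≤ 2 * m / (n - 1) + n - 2 ∧
      (qSpectralRadius G = 2 * m / (n - 1) + n - 2 ↔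
        G = ⊤ ∨ Nonempty (G ≃g completeBipartiteGraph (Fin 1) (Fin (n - 1)))) := by
  have hNV : Nonempty V := Fintype.card_pos_iff.mp (by omega)
  have hd1 : ∀ v, 1 ≤ G.degree v := sl_deg_ge_one G hconn (by omega)
  have hd : ∀ v, 0 < (G.degree v : ℝ) := fun v => by exact_mod_cast hd1 v
  have hrowle := sl_rowIneq G n m hn hn2 hm hconn
  set c : ℝ := 2 * m / ((n:ℝ) - 1) + n - 2 with hc
  have hub : ∀ μ ∈ spectrum ℝ (signlessLaplacian G), μ ≤ c := sl_eig_le G hd hrowle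
  have hQH : (signlessLaplacian G).IsHermitian := sl_herm G
  have hne : (spectrum ℝ (signlessLaplacian G)).Nonempty :=
    ⟨_, hQH.eigenvalues_mem_spectrum_real (Classical.arbitrary V)⟩
  have hbdd : BddAbove (spectrum ℝ (signlessLaplacian G)) := ⟨c, fun μ hμ => hub μ hμ⟩
  have hle : qSpectralRadius G ≤ c := csSup_le hne hub
  refine ⟨hle, ?_, ?_⟩
  · intro hq
    have hmem : c ∈ spectrum ℝ (signlessLaplacian G) := by
      have := Set.Nonempty.csSup_mem hne (Matrix.finite_spectrum _)
      rw [qSpectralRadius] at hq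
      rwa [hq] at this
    obtain ⟨x, hx0, hxe⟩ := (sl_spectrum_iff G c).1 hmem
    have hrows := sl_rows_eq_of_eig G hd hrowle hconn hx0 hxe
    rcases sl_classify G n m hn hn2 hm hconn hrows with hall | ⟨w, hstar⟩
    · left
      ext a b
      simp only [top_adj]
      exact ⟨fun h2 => G.ne_of_adj h2, fun h2 => hall a b h2⟩
    · exact Or.inr (sl_star_iso_of_structure G n hn hn2 w hstar)
  · intro h
    have hrows : ∀ v, (G.degree v : ℝ) * G.degree v
        + ∑ w ∈ G.neighborFinset v, (G.degree w : ℝ) = c * G.degree v := by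
      rcases h with h | hiso
      · apply sl_rows_of_full G n m hn hn2 hm
        intro a b hab
        rw [h]
        exact hab
      · obtain ⟨φ⟩ := hiso
        exact sl_rows_of_star G n m hn hn2 hm (sl_structure_of_star_iso G n φ)
    have hmem : c ∈ spectrum ℝ (signlessLaplacian G) := by
      rw [sl_spectrum_iff]
      refine ⟨fun v => (G.degree v : ℝ), ?_, ?_⟩
      · intro h0
        have := congrFun h0 (Classical.arbitrary V)
        exact (hd _).ne' (by simpa using this)
      · funext v
        rw [sl_mulVec, Pi.smul_apply, smul_eq_mul]
        exact hrows v
    exact le_antisymm hle (le_csSup hbdd hmem)
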